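/- For fixed constants y ≥ 0 and B > 0, the function h(t) = (2^{y/(B t)} − 1)·t is convex on (0, ∞). -/

import Mathlib

open Real Set

theorem stmt3 (y B : ℝ) (hy : 0 ≤ y) (hB : 0 < B) :
    ConvexOn ℝ (Set.Ioi (0:ℝ)) (fun t : ℝ => ((2:ℝ) ^ (y / (B * t)) - 1) * t) := by
  set c := y / B with hc
  have hc0 : 0 ≤ c := div_nonneg hy hB.le
  set L := Real.log 2 with hL
  -- rewrite exponent
  have hrw : ∀ t : ℝ, y / (B * t) = c / t := by
    intro t; rw [hc, div_div]
  simp only [hrw]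
  -- derivative of the inner map t ↦ 2^(c/t)
  have hg : ∀ t : ℝ, t ≠ 0 → HasDerivAt (fun t : ℝ => (2:ℝ) ^ (c / t))
      ((2:ℝ) ^ (c / t) * L * (-(c / t ^ 2))) t := by
    intro t ht
    have h1 : HasDerivAt (fun t : ℝ => c / t) (-(c / t ^ 2)) t := by
      simpa [div_eq_mul_inv, mul_comm, neg_mul] using (hasDerivAt_inv ht).const_mul c
    have h2 := (Real.hasStrictDerivAt_const_rpow (by norm_num : (0:ℝ) < 2) (c / t)).hasDerivAt
    simpa [mul_assoc, hL, Function.comp_def] using h2.comp t h1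
  apply convexOn_of_hasDerivWithinAt2_nonneg (f' := fun t => (2:ℝ) ^ (c / t) * (1 - c * L / t) - 1)
    (f'' := fun t => (2:ℝ) ^ (c / t) * (c ^ 2 * L ^ 2 / t ^ 3)) (convex_Ioi 0)
  · intro t ht
    exact (((hg t (ne_of_gt ht)).sub_const 1).mul (hasDerivAt_id t)).continuousAt.continuousWithinAt
  · rw [interior_Ioi]
    intro t ht
    have ht0 : t ≠ 0 := ne_of_gt ht
    have : HasDerivAt (fun t : ℝ => ((2:ℝ) ^ (c / t) - 1) * t)
        ((2:ℝ) ^ (c / t) * L * (-(c / t ^ 2)) * t + ((2:ℝ) ^ (c / t) - 1) * 1) t :=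
      ((hg t ht0).sub_const 1).mul (hasDerivAt_id t)
    have heq : (2:ℝ) ^ (c / t) * L * (-(c / t ^ 2)) * t + ((2:ℝ) ^ (c / t) - 1) * 1
        = (2:ℝ) ^ (c / t) * (1 - c * L / t) - 1 := by field_simp; ring
    rw [heq] at this
    exact this.hasDerivWithinAt
  · rw [interior_Ioi]
    intro t ht
    have ht0 : t ≠ 0 := ne_of_gt ht
    have h1 : HasDerivAt (fun t : ℝ => 1 - c * L / t) (c * L / t ^ 2) t := by
      have := ((hasDerivAt_inv ht0).const_mul (c * L)).const_sub 1
      simpa [div_eq_mul_inv, mul_comm, neg_mul] using this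
    have : HasDerivAt (fun t : ℝ => (2:ℝ) ^ (c / t) * (1 - c * L / t) - 1)
        ((2:ℝ) ^ (c / t) * L * (-(c / t ^ 2)) * (1 - c * L / t)
          + (2:ℝ) ^ (c / t) * (c * L / t ^ 2)) t :=
      ((hg t ht0).mul h1).sub_const 1
    have heq : (2:ℝ) ^ (c / t) * L * (-(c / t ^ 2)) * (1 - c * L / t)
          + (2:ℝ) ^ (c / t) * (c * L / t ^ 2)
        = (2:ℝ) ^ (c / t) * (c ^ 2 * L ^ 2 / t ^ 3) := by field_simp; ring
    rw [heq] at this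
    exact this.hasDerivWithinAt
  · rw [interior_Ioi]
    intro t ht
    have ht' : (0:ℝ) < t := ht
    have hL0 : 0 ≤ L := by rw [hL]; exact Real.log_nonneg (by norm_num)
    have h2 : (0:ℝ) < (2:ℝ) ^ (c / t) := Real.rpow_pos_of_pos (by norm_num) _
    positivity
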